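/- Let n ≥ 1 be an integer and let α, β > 0 be real numbers with α ≠ n, β ≠ n, and α + β > n. Then there is a constant C = C(n, α, β) such that for all x ∈ ℝⁿ: ∫_{ℝⁿ} ⟨x − x₁⟩^{−α} ⟨x₁⟩^{−β} dx₁ ≤ C ⟨x⟩^{−min(α, β, α+β−n)}. -/

import Mathlib

open MeasureTheory Real

open Set Metric

noncomputable def jb {n : ℕ} (γ : ℝ) (y : EuclideanSpace ℝ (Fin n)) : ENNReal :=
  ENNReal.ofReal (Real.sqrt (1 + ‖y‖ ^ 2) ^ (-γ))

lemma jb_base_ge_one {n : ℕ} (y : EuclideanSpace ℝ (Fin n)) : 1 ≤ Real.sqrt (1 + ‖y‖ ^ 2) :=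
  (Real.le_sqrt' one_pos).mpr (by nlinarith [sq_nonneg ‖y‖])

lemma jb_base_ge_norm {n : ℕ} (y : EuclideanSpace ℝ (Fin n)) : ‖y‖ ≤ Real.sqrt (1 + ‖y‖ ^ 2) :=
  calc ‖y‖ = Real.sqrt (‖y‖^2) := by rw [Real.sqrt_sq (norm_nonneg y)]
    _ ≤ Real.sqrt (1 + ‖y‖^2) := Real.sqrt_le_sqrt (by linarith)

lemma jb_le {n : ℕ} {γ a : ℝ} (hγ : 0 ≤ γ) (ha : 0 < a) (y : EuclideanSpace ℝ (Fin n))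
    (h : a ≤ Real.sqrt (1 + ‖y‖ ^ 2)) :
    jb γ y ≤ ENNReal.ofReal (a ^ (-γ)) :=
  ENNReal.ofReal_le_ofReal (Real.rpow_le_rpow_of_nonpos ha h (neg_nonpos.mpr hγ))

lemma dyadic' {t : ℝ} (ht : 1 ≤ t) : ∃ j : ℕ, (2:ℝ)^j ≤ t ∧ t ≤ 2^(j+1) := by
  refine ⟨⌊Real.logb 2 t⌋₊, ?_, ?_⟩
  · calc (2:ℝ)^(⌊Real.logb 2 t⌋₊) = (2:ℝ)^((⌊Real.logb 2 t⌋₊ : ℝ)) := (Real.rpow_natCast 2 _).symm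
      _ ≤ (2:ℝ) ^ Real.logb 2 t := by
          apply Real.rpow_le_rpow_of_exponent_le one_le_two
          exact Nat.floor_le (Real.logb_nonneg one_lt_two ht)
      _ = t := Real.rpow_logb two_pos (by norm_num) (by linarith)
  · calc t = (2:ℝ) ^ Real.logb 2 t := (Real.rpow_logb two_pos (by norm_num) (by linarith)).symm
      _ ≤ (2:ℝ) ^ ((⌊Real.logb 2 t⌋₊ + 1 : ℕ) : ℝ) := by
          apply Real.rpow_le_rpow_of_exponent_le one_le_two
          push_cast
          exact (Nat.lt_floor_add_one _).le
      _ = (2:ℝ)^(⌊Real.logb 2 t⌋₊ + 1) := Real.rpow_natCast 2 _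

lemma annulus_bound (n : ℕ) {γ a : ℝ} (hγ : 0 ≤ γ) (ha : 0 < a) :
    ∫⁻ y in {y : EuclideanSpace ℝ (Fin n) | a ≤ ‖y‖} ∩ closedBall 0 (2*a), jb γ y
      ≤ ENNReal.ofReal (a ^ (-γ) * (2*a) ^ n) * volume (ball (0 : EuclideanSpace ℝ (Fin n)) 1) := by
  have hmeas : MeasurableSet ({y : EuclideanSpace ℝ (Fin n) | a ≤ ‖y‖} ∩ closedBall 0 (2*a)) :=
    (measurableSet_le measurable_const measurable_norm).inter measurableSet_closedBall
  calc ∫⁻ y in {y : EuclideanSpace ℝ (Fin n) | a ≤ ‖y‖} ∩ closedBall 0 (2*a), jb γ y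
      ≤ ∫⁻ _ in {y : EuclideanSpace ℝ (Fin n) | a ≤ ‖y‖} ∩ closedBall 0 (2*a),
          ENNReal.ofReal (a ^ (-γ)) := by
        refine setLIntegral_mono' hmeas fun y hy => ?_
        exact jb_le hγ ha y (le_trans hy.1 (jb_base_ge_norm y))
    _ = ENNReal.ofReal (a ^ (-γ)) * volume ({y : EuclideanSpace ℝ (Fin n) | a ≤ ‖y‖} ∩ closedBall 0 (2*a)) := by
        rw [setLIntegral_const]
    _ ≤ ENNReal.ofReal (a ^ (-γ)) * volume (closedBall (0 : EuclideanSpace ℝ (Fin n)) (2*a)) := by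
        gcongr
        exact inter_subset_right
    _ = ENNReal.ofReal (a ^ (-γ)) * (ENNReal.ofReal ((2*a) ^ n) * volume (ball (0 : EuclideanSpace ℝ (Fin n)) 1)) := by
        rw [Measure.addHaar_closedBall _ _ (by positivity), finrank_euclideanSpace_fin]
    _ = ENNReal.ofReal (a ^ (-γ) * (2*a) ^ n) * volume (ball (0 : EuclideanSpace ℝ (Fin n)) 1) := by
        rw [← mul_assoc, ← ENNReal.ofReal_mul (by positivity)]

lemma pow_calc (n : ℕ) (γ r : ℝ) (hr : 0 < r) (j : ℕ) :
    (r/2^(j+1)) ^ (-γ) * ((r/2^j : ℝ))^n = (r ^ ((n:ℝ)-γ) * 2^γ) * ((2:ℝ)^(γ-(n:ℝ)))^j := by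
  have hb : (0:ℝ) < 2 := two_pos
  rw [← Real.rpow_natCast ((r/2^j : ℝ)) n, ← Real.rpow_natCast ((2:ℝ)^(γ-(n:ℝ))) j,
    ← Real.rpow_mul hb.le, ← Real.rpow_natCast (2:ℝ) (j+1), ← Real.rpow_natCast (2:ℝ) j,
    Real.div_rpow hr.le (Real.rpow_nonneg hb.le _),
    Real.div_rpow hr.le (Real.rpow_nonneg hb.le _),
    ← Real.rpow_mul hb.le, ← Real.rpow_mul hb.le, div_mul_div_comm, ← Real.rpow_add hr,
    ← Real.rpow_add hb, mul_assoc, ← Real.rpow_add hb,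
    div_eq_iff (ne_of_gt (Real.rpow_pos_of_pos hb _)), mul_assoc, ← Real.rpow_add hb]
  congr 1
  push_cast
  ring_nf
  simp

lemma pow_calc2 (n : ℕ) (γ R : ℝ) (hR : 0 < R) (j : ℕ) :
    (R*2^j) ^ (-γ) * ((2*(R*2^j) : ℝ))^n = (R ^ ((n:ℝ)-γ) * 2^(n:ℝ)) * ((2:ℝ)^((n:ℝ)-γ))^j := by
  have hb : (0:ℝ) < 2 := two_pos
  have h2j : (0:ℝ) < 2^j := by positivity
  rw [show (2*(R*2^j) : ℝ) = R * 2^(j+1) by ring]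
  rw [← Real.rpow_natCast ((R*2^(j+1) : ℝ)) n, ← Real.rpow_natCast ((2:ℝ)^((n:ℝ)-γ)) j,
    ← Real.rpow_mul hb.le, ← Real.rpow_natCast (2:ℝ) (j+1), ← Real.rpow_natCast (2:ℝ) j,
    Real.mul_rpow hR.le (Real.rpow_nonneg hb.le _),
    Real.mul_rpow hR.le (Real.rpow_nonneg hb.le _),
    ← Real.rpow_mul hb.le, ← Real.rpow_mul hb.le, mul_mul_mul_comm, ← Real.rpow_add hR,
    ← Real.rpow_add hb, mul_assoc, ← Real.rpow_add hb]
  rw [show (-γ + (n:ℝ)) = (n:ℝ) - γ by ring,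
    show ((j:ℝ) * -γ + ((j+1:ℕ):ℝ) * (n:ℝ)) = (n:ℝ) + ((n:ℝ) - γ) * (j:ℝ) by push_cast; ring,
    Real.rpow_add hb]
lemma geom_tsum (c q : ℝ) (hq0 : 0 ≤ q) (hq1 : q < 1) (v : ENNReal) (hv : v ≠ ⊤) :
    ∑' j : ℕ, ENNReal.ofReal (c * q^j) * v
      ≤ ENNReal.ofReal (c * ((1-q)⁻¹ * v.toReal)) := by
  rcases le_or_gt c 0 with hc | hc
  · have : ∀ j : ℕ, ENNReal.ofReal (c * q^j) * v = 0 := by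
      intro j
      rw [ENNReal.ofReal_eq_zero.mpr (mul_nonpos_of_nonpos_of_nonneg hc (by positivity)), zero_mul]
    simp [this]
  · have hterm : ∀ j : ℕ, ENNReal.ofReal (c * q^j) * v
        = (ENNReal.ofReal c * v) * (ENNReal.ofReal q)^j := by
      intro j
      rw [ENNReal.ofReal_mul hc.le, ENNReal.ofReal_pow hq0]
      ring
    refine le_of_eq ?_
    calc ∑' j : ℕ, ENNReal.ofReal (c * q^j) * v
        = (ENNReal.ofReal c * v) * ∑' j : ℕ, (ENNReal.ofReal q)^j := by
          rw [← ENNReal.tsum_mul_left]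
          exact tsum_congr hterm
      _ = (ENNReal.ofReal c * v) * ENNReal.ofReal ((1-q)⁻¹) := by
          rw [ENNReal.tsum_geometric, ← ENNReal.ofReal_one, ← ENNReal.ofReal_sub _ hq0,
            ENNReal.ofReal_inv_of_pos (by linarith)]
      _ = ENNReal.ofReal (c * ((1-q)⁻¹ * v.toReal)) := by
          rw [ENNReal.ofReal_mul hc.le, ENNReal.ofReal_mul (inv_nonneg.mpr (by linarith)),
            ENNReal.ofReal_toReal hv]
          ring

lemma ball_est (n : ℕ) (hn : 1 ≤ n) {γ : ℝ} (hγ0 : 0 < γ) (hγn : γ < n) :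
    ∃ C : ℝ, 0 < C ∧ ∀ r : ℝ, 1 ≤ r →
      ∫⁻ y in closedBall (0 : EuclideanSpace ℝ (Fin n)) r, jb γ y
        ≤ ENNReal.ofReal (C * r ^ ((n:ℝ) - γ)) := by
  set v : ENNReal := volume (ball (0 : EuclideanSpace ℝ (Fin n)) 1) with hv_def
  have hv : v ≠ ⊤ := measure_ball_lt_top.ne
  set q : ℝ := (2:ℝ) ^ (γ - (n:ℝ)) with hq_def
  have hq0 : 0 < q := Real.rpow_pos_of_pos two_pos _
  have hq1 : q < 1 := Real.rpow_lt_one_of_one_lt_of_neg one_lt_two (by linarith)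
  have hX : (0:ℝ) ≤ (1-q)⁻¹ * v.toReal :=
    mul_nonneg (inv_nonneg.mpr (by linarith)) ENNReal.toReal_nonneg
  have h2γ : (0:ℝ) < 2^γ := Real.rpow_pos_of_pos two_pos _
  refine ⟨2^γ * ((1-q)⁻¹ * v.toReal) + 1,
    by nlinarith, fun r hr => ?_⟩
  have hr0 : (0:ℝ) < r := lt_of_lt_of_le one_pos hr
  set S : ℕ → Set (EuclideanSpace ℝ (Fin n)) :=
    fun j => {y : EuclideanSpace ℝ (Fin n) | r/2^(j+1) ≤ ‖y‖} ∩ closedBall 0 (2*(r/2^(j+1)))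
    with hS_def
  have hradius : ∀ j : ℕ, 2*(r/2^(j+1)) = r/2^j := by
    intro j
    rw [pow_succ]
    field_simp
  have hcover : closedBall (0 : EuclideanSpace ℝ (Fin n)) r
      ⊆ closedBall 0 0 ∪ ⋃ j, S j := by
    intro y hy
    rw [mem_closedBall_zero_iff] at hy
    rcases eq_or_lt_of_le (norm_nonneg y) with h0 | h0
    · left; rw [mem_closedBall_zero_iff, ← h0]
    · right
      have ht : 1 ≤ r / ‖y‖ := (one_le_div h0).mpr hy
      obtain ⟨j, hj1, hj2⟩ := dyadic' ht
      refine mem_iUnion.mpr ⟨j, ?_, ?_⟩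
      · show r/2^(j+1) ≤ ‖y‖
        rw [div_le_iff₀ (by positivity)]
        calc r = (r/‖y‖) * ‖y‖ := by field_simp
          _ ≤ 2^(j+1) * ‖y‖ := by gcongr
          _ = ‖y‖ * 2^(j+1) := by ring
      · rw [mem_closedBall_zero_iff, hradius j, le_div_iff₀ (by positivity)]
        calc ‖y‖ * 2^j ≤ ‖y‖ * (r/‖y‖) := by gcongr
          _ = r := by field_simp
  calc ∫⁻ y in closedBall (0 : EuclideanSpace ℝ (Fin n)) r, jb γ y
      ≤ ∫⁻ y in closedBall (0 : EuclideanSpace ℝ (Fin n)) 0 ∪ ⋃ j, S j, jb γ y :=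
        lintegral_mono_set hcover
    _ ≤ (∫⁻ y in closedBall (0 : EuclideanSpace ℝ (Fin n)) 0, jb γ y)
        + ∫⁻ y in ⋃ j, S j, jb γ y := lintegral_union_le _ _ _
    _ = ∫⁻ y in ⋃ j, S j, jb γ y := by
        rw [setLIntegral_measure_zero _ _ ?_, zero_add]
        rw [Measure.addHaar_closedBall _ _ le_rfl, finrank_euclideanSpace_fin,
          zero_pow (by omega), ENNReal.ofReal_zero, zero_mul]
    _ ≤ ∑' j, ∫⁻ y in S j, jb γ y := lintegral_iUnion_le _ _
    _ ≤ ∑' j, ENNReal.ofReal ((r ^ ((n:ℝ)-γ) * 2^γ) * q^j) * v := by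
        refine ENNReal.tsum_le_tsum fun j => ?_
        have := annulus_bound n hγ0.le (show (0:ℝ) < r/2^(j+1) by positivity)
        rw [hradius j] at this
        calc ∫⁻ y in S j, jb γ y
            ≤ ENNReal.ofReal ((r/2^(j+1)) ^ (-γ) * (r/2^j) ^ n) * v := by
              rw [hS_def]
              simpa [hradius j] using this
          _ = ENNReal.ofReal ((r ^ ((n:ℝ)-γ) * 2^γ) * q^j) * v := by
              rw [pow_calc n γ r hr0 j]
    _ ≤ ENNReal.ofReal ((r ^ ((n:ℝ)-γ) * 2^γ) * ((1-q)⁻¹ * v.toReal)) :=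
        geom_tsum _ q hq0.le hq1 v hv
    _ ≤ ENNReal.ofReal ((2^γ * ((1-q)⁻¹ * v.toReal) + 1) * r ^ ((n:ℝ) - γ)) := by
        apply ENNReal.ofReal_le_ofReal
        have h1 : (0:ℝ) ≤ r ^ ((n:ℝ)-γ) := Real.rpow_nonneg hr0.le _
        nlinarith [h1]

lemma tail_est (n : ℕ) (hn : 1 ≤ n) {γ : ℝ} (hγn : (n:ℝ) < γ) :
    ∃ C : ℝ, 0 < C ∧ ∀ R : ℝ, 1 ≤ R →
      ∫⁻ y in {y : EuclideanSpace ℝ (Fin n) | R ≤ ‖y‖}, jb γ y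
        ≤ ENNReal.ofReal (C * R ^ ((n:ℝ) - γ)) := by
  have hγ0 : 0 < γ := lt_of_le_of_lt (by positivity) hγn
  set v : ENNReal := volume (ball (0 : EuclideanSpace ℝ (Fin n)) 1) with hv_def
  have hv : v ≠ ⊤ := measure_ball_lt_top.ne
  set q : ℝ := (2:ℝ) ^ ((n:ℝ) - γ) with hq_def
  have hq0 : 0 < q := Real.rpow_pos_of_pos two_pos _
  have hq1 : q < 1 := Real.rpow_lt_one_of_one_lt_of_neg one_lt_two (by linarith)
  have hX : (0:ℝ) ≤ (1-q)⁻¹ * v.toReal :=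
    mul_nonneg (inv_nonneg.mpr (by linarith)) ENNReal.toReal_nonneg
  have h2n : (0:ℝ) < 2^(n:ℝ) := Real.rpow_pos_of_pos two_pos _
  refine ⟨2^(n:ℝ) * ((1-q)⁻¹ * v.toReal) + 1, by nlinarith, fun R hR => ?_⟩
  have hR0 : (0:ℝ) < R := lt_of_lt_of_le one_pos hR
  set S : ℕ → Set (EuclideanSpace ℝ (Fin n)) :=
    fun j => {y : EuclideanSpace ℝ (Fin n) | R*2^j ≤ ‖y‖} ∩ closedBall 0 (2*(R*2^j))
    with hS_def
  have hcover : {y : EuclideanSpace ℝ (Fin n) | R ≤ ‖y‖} ⊆ ⋃ j, S j := by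
    intro y hy
    have hy' : R ≤ ‖y‖ := hy
    have ht : 1 ≤ ‖y‖ / R := (one_le_div hR0).mpr hy'
    obtain ⟨j, hj1, hj2⟩ := dyadic' ht
    refine mem_iUnion.mpr ⟨j, ?_, ?_⟩
    · show R*2^j ≤ ‖y‖
      calc R*2^j ≤ R*(‖y‖/R) := by gcongr
        _ = ‖y‖ := by field_simp
    · rw [mem_closedBall_zero_iff, show (2*(R*2^j) : ℝ) = R*2^(j+1) by ring]
      calc ‖y‖ = R * (‖y‖/R) := by field_simp
        _ ≤ R * 2^(j+1) := by gcongr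
  calc ∫⁻ y in {y : EuclideanSpace ℝ (Fin n) | R ≤ ‖y‖}, jb γ y
      ≤ ∫⁻ y in ⋃ j, S j, jb γ y := lintegral_mono_set hcover
    _ ≤ ∑' j, ∫⁻ y in S j, jb γ y := lintegral_iUnion_le _ _
    _ ≤ ∑' j, ENNReal.ofReal ((R ^ ((n:ℝ)-γ) * 2^(n:ℝ)) * q^j) * v := by
        refine ENNReal.tsum_le_tsum fun j => ?_
        calc ∫⁻ y in S j, jb γ y
            ≤ ENNReal.ofReal ((R*2^j) ^ (-γ) * (2*(R*2^j)) ^ n) * v :=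
              annulus_bound n hγ0.le (by positivity)
          _ = ENNReal.ofReal ((R ^ ((n:ℝ)-γ) * 2^(n:ℝ)) * q^j) * v := by
              rw [pow_calc2 n γ R hR0 j]
    _ ≤ ENNReal.ofReal ((R ^ ((n:ℝ)-γ) * 2^(n:ℝ)) * ((1-q)⁻¹ * v.toReal)) :=
        geom_tsum _ q hq0.le hq1 v hv
    _ ≤ ENNReal.ofReal ((2^(n:ℝ) * ((1-q)⁻¹ * v.toReal) + 1) * R ^ ((n:ℝ) - γ)) := by
        apply ENNReal.ofReal_le_ofReal
        have h1 : (0:ℝ) ≤ R ^ ((n:ℝ)-γ) := Real.rpow_nonneg hR0.le _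
        nlinarith [h1]

lemma total_est (n : ℕ) {γ : ℝ} (hγn : (n:ℝ) < γ) :
    ∃ T : ℝ, 0 < T ∧ ∫⁻ y : EuclideanSpace ℝ (Fin n), jb γ y ≤ ENNReal.ofReal T := by
  have hint : Integrable (fun y : EuclideanSpace ℝ (Fin n) => ((1:ℝ) + ‖y‖^2) ^ (-γ/2)) :=
    integrable_rpow_neg_one_add_norm_sq (by rwa [finrank_euclideanSpace_fin])
  have hfin : ∫⁻ y : EuclideanSpace ℝ (Fin n), jb γ y ≠ ⊤ := by
    have heq : ∀ y : EuclideanSpace ℝ (Fin n),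
        jb γ y = ENNReal.ofReal (((1:ℝ) + ‖y‖^2) ^ (-γ/2)) := by
      intro y
      rw [jb, Real.rpow_div_two_eq_sqrt _ (by positivity)]
    simp_rw [heq]
    have h2 := hint.2
    rw [HasFiniteIntegral] at h2
    rw [← lintegral_enorm_of_nonneg
      (fun y : EuclideanSpace ℝ (Fin n) => Real.rpow_nonneg (by positivity) (-γ/2))]
    exact h2.ne
  exact ⟨(∫⁻ y : EuclideanSpace ℝ (Fin n), jb γ y).toReal + 1, by positivity,
    by rw [ENNReal.ofReal_add (by positivity) zero_le_one]
       calc ∫⁻ y : EuclideanSpace ℝ (Fin n), jb γ y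
            = ENNReal.ofReal ((∫⁻ y : EuclideanSpace ℝ (Fin n), jb γ y).toReal) :=
             (ENNReal.ofReal_toReal hfin).symm
         _ ≤ _ := le_self_add⟩

lemma lintegral_sub_inv (n : ℕ) (f : EuclideanSpace ℝ (Fin n) → ENNReal)
    (x : EuclideanSpace ℝ (Fin n)) : ∫⁻ y, f (x - y) = ∫⁻ y, f y := by
  have h1 : ∀ y : EuclideanSpace ℝ (Fin n), f (x - y) = (f ∘ Neg.neg) (y - x) := by
    intro y; simp [neg_sub]
  simp_rw [h1]
  rw [lintegral_sub_right_eq_self (f ∘ Neg.neg) x]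
  calc ∫⁻ y, f (-y) = ∫⁻ y, f y ∂(Measure.map Neg.neg volume) :=
        (lintegral_map_equiv f (MeasurableEquiv.neg (EuclideanSpace ℝ (Fin n)))).symm
    _ = ∫⁻ y, f y := by rw [Measure.map_neg_eq_self]

lemma lem_ball (n : ℕ) (hn : 1 ≤ n) {γ : ℝ} (hγ0 : 0 < γ) (hγn : γ ≠ (n:ℝ)) :
    ∃ C : ℝ, 0 < C ∧ ∀ r : ℝ, 1 ≤ r →
      ∫⁻ y in closedBall (0 : EuclideanSpace ℝ (Fin n)) r, jb γ y
        ≤ ENNReal.ofReal (C * r ^ (max ((n:ℝ) - γ) 0)) := by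
  rcases lt_or_gt_of_ne hγn with h | h
  · obtain ⟨C, hC, hbound⟩ := ball_est n hn hγ0 h
    refine ⟨C, hC, fun r hr => ?_⟩
    rw [max_eq_left (by linarith)]
    exact hbound r hr
  · obtain ⟨T, hT, htot⟩ := total_est n h
    refine ⟨T, hT, fun r hr => ?_⟩
    rw [max_eq_right (by linarith), Real.rpow_zero, mul_one]
    exact le_trans (setLIntegral_le_lintegral _ _) htot

lemma sqrt_quarter {a b : ℝ} (ha : 0 ≤ a) (h : a/2 ≤ b) :
    Real.sqrt (1+a^2)/2 ≤ Real.sqrt (1+b^2) := by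
  apply (Real.le_sqrt' (by positivity)).mpr
  rw [div_pow, Real.sq_sqrt (by positivity)]
  nlinarith

lemma half_rpow_neg (s γ : ℝ) (hs : 0 < s) : (s/2)^(-γ) = 2^γ * s^(-γ) := by
  rw [Real.div_rpow hs.le (by norm_num), Real.rpow_neg (by norm_num : (0:ℝ) ≤ 2)]
  field_simp

set_option maxHeartbeats 1000000 in
/-- For `α, β > 0` with `α ≠ n`, `β ≠ n`, `α + β > n`, one has
`∫ ⟨x - x₁⟩^{-α} ⟨x₁⟩^{-β} dx₁ ≤ C ⟨x⟩^{-min(α, β, α+β-n)}` uniformly in `x ∈ ℝⁿ`. -/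
theorem stmt_2 (n : ℕ) (hn : 1 ≤ n) (α β : ℝ) (hα : 0 < α) (hβ : 0 < β)
    (hαn : α ≠ n) (hβn : β ≠ n) (hαβ : (n : ℝ) < α + β) :
    ∃ C : ℝ, 0 < C ∧ ∀ x : EuclideanSpace ℝ (Fin n),
      (∫ x₁ : EuclideanSpace ℝ (Fin n),
          Real.sqrt (1 + ‖x - x₁‖ ^ 2) ^ (-α) * Real.sqrt (1 + ‖x₁‖ ^ 2) ^ (-β))
        ≤ C * Real.sqrt (1 + ‖x‖ ^ 2) ^ (-min α (min β (α + β - n))) := by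
  obtain ⟨Cα, hCα, hballα⟩ := lem_ball n hn hα hαn
  obtain ⟨Cβ, hCβ, hballβ⟩ := lem_ball n hn hβ hβn
  obtain ⟨Ct, hCt, htail⟩ := tail_est n hn (show (n:ℝ) < α+β from hαβ)
  obtain ⟨T, hT, htot⟩ := total_est n (show (n:ℝ) < α+β from hαβ)
  set m := min α (min β (α+β-(n:ℝ))) with hm_def
  have hmα : m ≤ α := min_le_left _ _
  have hmβ : m ≤ β := le_trans (min_le_right _ _) (min_le_left _ _)
  have hmαβ : m ≤ α+β-(n:ℝ) := le_trans (min_le_right _ _) (min_le_right _ _)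
  have hm0 : 0 < m := lt_min hα (lt_min hβ (by linarith))
  have h2α : (0:ℝ) < 2^α := Real.rpow_pos_of_pos two_pos _
  have h2β : (0:ℝ) < 2^β := Real.rpow_pos_of_pos two_pos _
  have h2m : (0:ℝ) < 2^m := Real.rpow_pos_of_pos two_pos _
  have h3n : (0:ℝ) < 3^(n:ℝ) := Real.rpow_pos_of_pos three_pos _
  set C1 : ℝ := 2^α * Cβ with hC1_def
  set C2 : ℝ := 2^β * (Cα * 3^(n:ℝ)) with hC2_def
  set C3 : ℝ := 2^α * (Ct + T * 2^m) with hC3_def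
  have hC1 : 0 < C1 := by positivity
  have hC2 : 0 < C2 := by positivity
  have hC3 : 0 < C3 := by positivity
  refine ⟨C1+C2+C3, by positivity, fun x => ?_⟩
  set s := Real.sqrt (1+‖x‖^2) with hs_def
  have hs1 : 1 ≤ s := jb_base_ge_one x
  have hs0 : 0 < s := lt_of_lt_of_le one_pos hs1
  have hsx : ‖x‖ ≤ s := jb_base_ge_norm x
  have hsm : (0:ℝ) < s^(-m) := Real.rpow_pos_of_pos hs0 _
  set F : EuclideanSpace ℝ (Fin n) → ENNReal := fun y =>
    ENNReal.ofReal (Real.sqrt (1 + ‖x - y‖ ^ 2) ^ (-α) * Real.sqrt (1 + ‖y‖ ^ 2) ^ (-β))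
    with hF_def
  have hFsplit : ∀ y, F y = jb α (x-y) * jb β y := fun y => by
    rw [hF_def, jb, jb, ← ENNReal.ofReal_mul (by positivity)]
  set A := closedBall (0 : EuclideanSpace ℝ (Fin n)) (‖x‖/2) with hA_def
  set Bs := {y : EuclideanSpace ℝ (Fin n) | 2*‖x‖ < ‖y‖} with hBs_def
  set Cs := (A ∪ Bs)ᶜ with hCs_def
  have hmeasBs : MeasurableSet Bs := measurableSet_lt measurable_const measurable_norm
  have hmeasCs : MeasurableSet Cs := (measurableSet_closedBall.union hmeasBs).compl
  -- Region A
  have hA : ∫⁻ y in A, F y ≤ ENNReal.ofReal (C1 * s^(-m)) := by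
    have hpt : ∀ y ∈ A, F y ≤ ENNReal.ofReal (2^α * s^(-α)) * jb β y := by
      intro y hy
      rw [hFsplit y]
      refine mul_le_mul_left ?_ _
      rw [← half_rpow_neg s α hs0]
      apply jb_le hα.le (by positivity)
      apply sqrt_quarter (norm_nonneg x)
      have h1 : ‖y‖ ≤ ‖x‖/2 := mem_closedBall_zero_iff.mp hy
      have h2 : ‖x‖ - ‖y‖ ≤ ‖x-y‖ := norm_sub_norm_le x y
      linarith
    have hexp : -α + max ((n:ℝ)-β) 0 ≤ -m := by
      rcases lt_or_gt_of_ne hβn with h | h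
      · rw [max_eq_left (by linarith)]; linarith
      · rw [max_eq_right (by linarith)]; linarith
    calc ∫⁻ y in A, F y ≤ ∫⁻ y in A, ENNReal.ofReal (2^α * s^(-α)) * jb β y :=
          setLIntegral_mono' measurableSet_closedBall hpt
      _ = ENNReal.ofReal (2^α * s^(-α)) * ∫⁻ y in A, jb β y :=
          lintegral_const_mul' _ _ ENNReal.ofReal_ne_top
      _ ≤ ENNReal.ofReal (2^α * s^(-α)) * ENNReal.ofReal (Cβ * s^(max ((n:ℝ)-β) 0)) := by
          refine mul_le_mul_right ?_ _
          refine le_trans (lintegral_mono_set ?_) (hballβ s hs1)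
          exact closedBall_subset_closedBall (by linarith)
      _ ≤ ENNReal.ofReal (C1 * s^(-m)) := by
          rw [← ENNReal.ofReal_mul (by positivity)]
          apply ENNReal.ofReal_le_ofReal
          calc 2^α * s^(-α) * (Cβ * s^(max ((n:ℝ)-β) 0))
              = C1 * (s^(-α) * s^(max ((n:ℝ)-β) 0)) := by rw [hC1_def]; ring
            _ = C1 * s^(-α + max ((n:ℝ)-β) 0) := by rw [← Real.rpow_add hs0]
            _ ≤ C1 * s^(-m) := by
                apply mul_le_mul_of_nonneg_left _ hC1.le
                exact Real.rpow_le_rpow_of_exponent_le hs1 hexp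
  -- Region Cs
  have hCs : ∫⁻ y in Cs, F y ≤ ENNReal.ofReal (C2 * s^(-m)) := by
    have hpt : ∀ y ∈ Cs, F y ≤ ENNReal.ofReal (2^β * s^(-β)) * jb α (x-y) := by
      intro y hy
      rw [hFsplit y, mul_comm]
      refine mul_le_mul_left ?_ _
      rw [← half_rpow_neg s β hs0]
      apply jb_le hβ.le (by positivity)
      apply sqrt_quarter (norm_nonneg x)
      have h1 : ¬ (y ∈ A) := fun h => hy (Or.inl h)
      rw [hA_def, mem_closedBall_zero_iff] at h1
      linarith [not_le.mp h1]
    have hexp : -β + max ((n:ℝ)-α) 0 ≤ -m := by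
      rcases lt_or_gt_of_ne hαn with h | h
      · rw [max_eq_left (by linarith)]; linarith
      · rw [max_eq_right (by linarith)]; linarith
    have hchg : ∫⁻ y in closedBall x (3*‖x‖), jb α (x-y)
        = ∫⁻ z in closedBall (0 : EuclideanSpace ℝ (Fin n)) (3*‖x‖), jb α z := by
      rw [← lintegral_indicator measurableSet_closedBall,
        ← lintegral_indicator measurableSet_closedBall]
      have hind : ∀ y, (closedBall x (3*‖x‖)).indicator (fun y => jb α (x - y)) y
          = ((closedBall (0 : EuclideanSpace ℝ (Fin n)) (3*‖x‖)).indicator (jb α)) (x - y) := by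
        intro y
        by_cases hy : y ∈ closedBall x (3*‖x‖)
        · rw [indicator_of_mem hy, indicator_of_mem]
          rw [mem_closedBall_zero_iff]
          rw [mem_closedBall, dist_eq_norm] at hy
          rwa [norm_sub_rev]
        · rw [indicator_of_notMem hy, indicator_of_notMem]
          intro hc
          apply hy
          rw [mem_closedBall_zero_iff] at hc
          rw [mem_closedBall, dist_eq_norm, norm_sub_rev]
          exact hc
      simp_rw [hind]
      exact lintegral_sub_inv n _ x
    calc ∫⁻ y in Cs, F y ≤ ∫⁻ y in Cs, ENNReal.ofReal (2^β * s^(-β)) * jb α (x-y) :=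
          setLIntegral_mono' hmeasCs hpt
      _ = ENNReal.ofReal (2^β * s^(-β)) * ∫⁻ y in Cs, jb α (x-y) :=
          lintegral_const_mul' _ _ ENNReal.ofReal_ne_top
      _ ≤ ENNReal.ofReal (2^β * s^(-β)) * ENNReal.ofReal (Cα * (3*s)^(max ((n:ℝ)-α) 0)) := by
          refine mul_le_mul_right ?_ _
          have hsub : Cs ⊆ closedBall x (3*‖x‖) := by
            intro y hy
            have h2 : ¬ (y ∈ Bs) := fun h => hy (Or.inr h)
            rw [hBs_def, mem_setOf_eq, not_lt] at h2
            rw [mem_closedBall, dist_eq_norm]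
            calc ‖y - x‖ ≤ ‖y‖ + ‖x‖ := norm_sub_le y x
              _ ≤ 3*‖x‖ := by linarith
          calc ∫⁻ y in Cs, jb α (x-y)
              ≤ ∫⁻ y in closedBall x (3*‖x‖), jb α (x-y) := lintegral_mono_set hsub
            _ = ∫⁻ z in closedBall (0 : EuclideanSpace ℝ (Fin n)) (3*‖x‖), jb α z := hchg
            _ ≤ ∫⁻ z in closedBall (0 : EuclideanSpace ℝ (Fin n)) (3*s), jb α z :=
                lintegral_mono_set (closedBall_subset_closedBall (by linarith))
            _ ≤ ENNReal.ofReal (Cα * (3*s)^(max ((n:ℝ)-α) 0)) := hballα (3*s) (by linarith)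
      _ ≤ ENNReal.ofReal (C2 * s^(-m)) := by
          rw [← ENNReal.ofReal_mul (by positivity)]
          apply ENNReal.ofReal_le_ofReal
          have hmax_n : max ((n:ℝ)-α) 0 ≤ (n:ℝ) := max_le (by linarith) (by positivity)
          have h3e : (3:ℝ)^(max ((n:ℝ)-α) 0) ≤ 3^(n:ℝ) :=
            Real.rpow_le_rpow_of_exponent_le (by norm_num) hmax_n
          calc 2^β * s^(-β) * (Cα * (3*s)^(max ((n:ℝ)-α) 0))
              = 2^β * s^(-β) * (Cα * (3^(max ((n:ℝ)-α) 0) * s^(max ((n:ℝ)-α) 0))) := by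
                rw [Real.mul_rpow (by norm_num) hs0.le]
            _ ≤ 2^β * s^(-β) * (Cα * (3^(n:ℝ) * s^(max ((n:ℝ)-α) 0))) := by
                have hstep : (3:ℝ)^(max ((n:ℝ)-α) 0) * s^(max ((n:ℝ)-α) 0)
                    ≤ 3^(n:ℝ) * s^(max ((n:ℝ)-α) 0) :=
                  mul_le_mul_of_nonneg_right h3e (Real.rpow_nonneg hs0.le _)
                have := mul_le_mul_of_nonneg_left hstep hCα.le
                have := mul_le_mul_of_nonneg_left this (by positivity : (0:ℝ) ≤ 2^β * s^(-β))
                linarith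
            _ = C2 * (s^(-β) * s^(max ((n:ℝ)-α) 0)) := by rw [hC2_def]; ring
            _ = C2 * s^(-β + max ((n:ℝ)-α) 0) := by rw [← Real.rpow_add hs0]
            _ ≤ C2 * s^(-m) := by
                apply mul_le_mul_of_nonneg_left _ hC2.le
                exact Real.rpow_le_rpow_of_exponent_le hs1 hexp
  -- Region Bs
  have hB : ∫⁻ y in Bs, F y ≤ ENNReal.ofReal (C3 * s^(-m)) := by
    have hpt : ∀ y ∈ Bs, F y ≤ ENNReal.ofReal ((2:ℝ)^α) * jb (α+β) y := by
      intro y hy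
      rw [hBs_def, mem_setOf_eq] at hy
      have hxy : ‖y‖/2 ≤ ‖x-y‖ := by
        have h2 : ‖y‖ - ‖x‖ ≤ ‖y-x‖ := norm_sub_norm_le y x
        rw [norm_sub_rev x y]
        linarith [norm_nonneg x]
      have hsq : Real.sqrt (1+‖y‖^2)/2 ≤ Real.sqrt (1+‖x-y‖^2) :=
        sqrt_quarter (norm_nonneg y) hxy
      have h1 : Real.sqrt (1+‖x-y‖^2) ^ (-α) ≤ 2^α * Real.sqrt (1+‖y‖^2)^(-α) := by
        rw [← half_rpow_neg _ α (lt_of_lt_of_le one_pos (jb_base_ge_one y))]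
        exact Real.rpow_le_rpow_of_nonpos (by positivity) hsq (neg_nonpos.mpr hα.le)
      rw [hF_def]
      calc ENNReal.ofReal (Real.sqrt (1 + ‖x - y‖ ^ 2) ^ (-α) * Real.sqrt (1 + ‖y‖ ^ 2) ^ (-β))
          ≤ ENNReal.ofReal ((2^α * Real.sqrt (1+‖y‖^2)^(-α)) * Real.sqrt (1 + ‖y‖ ^ 2) ^ (-β)) := by
            apply ENNReal.ofReal_le_ofReal
            exact mul_le_mul_of_nonneg_right h1 (by positivity)
        _ = ENNReal.ofReal ((2:ℝ)^α) * jb (α+β) y := by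
            rw [jb, ← ENNReal.ofReal_mul (by positivity)]
            congr 1
            rw [mul_assoc, ← Real.rpow_add (lt_of_lt_of_le one_pos (jb_base_ge_one y)), neg_add]
    have hmain : ∫⁻ y in Bs, jb (α+β) y ≤ ENNReal.ofReal ((Ct + T * 2^m) * s^(-m)) := by
      rcases le_or_gt 1 ‖x‖ with hx1 | hx1
      · have hsub : Bs ⊆ {y : EuclideanSpace ℝ (Fin n) | 2*‖x‖ ≤ ‖y‖} := by
          intro y hy
          simp only [hBs_def, mem_setOf_eq] at hy ⊢
          exact le_of_lt hy
        have hs2x : s ≤ 2*‖x‖ := by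
          rw [hs_def]
          calc Real.sqrt (1+‖x‖^2) ≤ Real.sqrt ((2*‖x‖)^2) :=
                Real.sqrt_le_sqrt (by nlinarith)
            _ = 2*‖x‖ := Real.sqrt_sq (by positivity)
        calc ∫⁻ y in Bs, jb (α+β) y
            ≤ ∫⁻ y in {y : EuclideanSpace ℝ (Fin n) | 2*‖x‖ ≤ ‖y‖}, jb (α+β) y :=
              lintegral_mono_set hsub
          _ ≤ ENNReal.ofReal (Ct * (2*‖x‖)^((n:ℝ) - (α+β))) := htail (2*‖x‖) (by linarith)
          _ ≤ ENNReal.ofReal ((Ct + T * 2^m) * s^(-m)) := by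
              apply ENNReal.ofReal_le_ofReal
              have h1 : (2*‖x‖)^((n:ℝ) - (α+β)) ≤ s^((n:ℝ) - (α+β)) :=
                Real.rpow_le_rpow_of_nonpos hs0 hs2x (by linarith)
              have h2 : s^((n:ℝ) - (α+β)) ≤ s^(-m) :=
                Real.rpow_le_rpow_of_exponent_le hs1 (by linarith)
              nlinarith [mul_le_mul_of_nonneg_left (h1.trans h2) hCt.le,
                mul_nonneg (mul_nonneg hT.le h2m.le) hsm.le]
      · have hs2 : s ≤ 2 := by
          rw [hs_def]
          calc Real.sqrt (1+‖x‖^2) ≤ Real.sqrt 4 :=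
                Real.sqrt_le_sqrt (by nlinarith [norm_nonneg x])
            _ = 2 := by rw [show (4:ℝ) = 2^2 by norm_num, Real.sqrt_sq (by norm_num)]
        have hkey : (1:ℝ) ≤ 2^m * s^(-m) := by
          have h1 : s^m ≤ 2^m := Real.rpow_le_rpow hs0.le hs2 hm0.le
          have h2 : s^(-m) = (s^m)⁻¹ := Real.rpow_neg hs0.le m
          have h3 : (0:ℝ) < s^m := Real.rpow_pos_of_pos hs0 m
          rw [h2, ← div_eq_mul_inv, le_div_iff₀ h3]
          linarith
        calc ∫⁻ y in Bs, jb (α+β) y ≤ ∫⁻ y, jb (α+β) y := setLIntegral_le_lintegral _ _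
          _ ≤ ENNReal.ofReal T := htot
          _ ≤ ENNReal.ofReal ((Ct + T * 2^m) * s^(-m)) := by
              apply ENNReal.ofReal_le_ofReal
              have : T * 1 ≤ T * (2^m * s^(-m)) := mul_le_mul_of_nonneg_left hkey hT.le
              nlinarith
    calc ∫⁻ y in Bs, F y ≤ ∫⁻ y in Bs, ENNReal.ofReal ((2:ℝ)^α) * jb (α+β) y :=
          setLIntegral_mono' hmeasBs hpt
      _ = ENNReal.ofReal ((2:ℝ)^α) * ∫⁻ y in Bs, jb (α+β) y :=
          lintegral_const_mul' _ _ ENNReal.ofReal_ne_top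
      _ ≤ ENNReal.ofReal ((2:ℝ)^α) * ENNReal.ofReal ((Ct + T * 2^m) * s^(-m)) :=
          mul_le_mul_right hmain _
      _ = ENNReal.ofReal (C3 * s^(-m)) := by
          rw [← ENNReal.ofReal_mul (by positivity), hC3_def]
          congr 1
          ring
  -- combine
  have hsplit : ∫⁻ y, F y ≤ ENNReal.ofReal ((C1+C2+C3) * s^(-m)) := by
    calc ∫⁻ y, F y = ∫⁻ y in Set.univ, F y := (setLIntegral_univ _).symm
      _ = ∫⁻ y in (A ∪ Bs) ∪ Cs, F y := by rw [union_compl_self]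
      _ ≤ (∫⁻ y in A ∪ Bs, F y) + ∫⁻ y in Cs, F y := lintegral_union_le _ _ _
      _ ≤ ((∫⁻ y in A, F y) + ∫⁻ y in Bs, F y) + ∫⁻ y in Cs, F y :=
          add_le_add_left (lintegral_union_le _ _ _) _
      _ ≤ (ENNReal.ofReal (C1 * s^(-m)) + ENNReal.ofReal (C3 * s^(-m)))
          + ENNReal.ofReal (C2 * s^(-m)) := add_le_add (add_le_add hA hB) hCs
      _ = ENNReal.ofReal ((C1+C2+C3) * s^(-m)) := by
          rw [← ENNReal.ofReal_add (by positivity) (by positivity),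
            ← ENNReal.ofReal_add (by positivity) (by positivity)]
          congr 1
          ring
  have hcont : Continuous fun y : EuclideanSpace ℝ (Fin n) =>
      Real.sqrt (1 + ‖x - y‖ ^ 2) ^ (-α) * Real.sqrt (1 + ‖y‖ ^ 2) ^ (-β) := by
    have hc1 : Continuous fun y : EuclideanSpace ℝ (Fin n) => Real.sqrt (1 + ‖x - y‖ ^ 2) :=
      Real.continuous_sqrt.comp (continuous_const.add ((continuous_const.sub continuous_id).norm.pow 2))
    have hc2 : Continuous fun y : EuclideanSpace ℝ (Fin n) => Real.sqrt (1 + ‖y‖ ^ 2) :=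
      Real.continuous_sqrt.comp (continuous_const.add (continuous_norm.pow 2))
    exact (hc1.rpow_const fun y =>
        Or.inl (ne_of_gt (lt_of_lt_of_le one_pos (jb_base_ge_one (x - y))))).mul
      (hc2.rpow_const fun y => Or.inl (ne_of_gt (lt_of_lt_of_le one_pos (jb_base_ge_one y))))
  rw [integral_eq_lintegral_of_nonneg_ae
    (Filter.Eventually.of_forall fun y => by positivity) hcont.aestronglyMeasurable]
  calc (∫⁻ y, F y).toReal ≤ (ENNReal.ofReal ((C1+C2+C3) * s^(-m))).toReal :=
        ENNReal.toReal_mono ENNReal.ofReal_ne_top hsplit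
    _ = (C1+C2+C3) * s^(-m) := ENNReal.toReal_ofReal (by positivity)
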